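/- arXiv:1903.03580 — 2 statements merged into one kernel-verified Lean document; each statement's English description precedes it below -/
import Mathlib

section
/- Let β ≥ γ ≥ 0 with β + γ > 1. Then there exists a constant C = C(β,γ) > 0 such that for all k₁, k₂ ∈ ℝ, ∫_ℝ ⟨τ − k₁⟩^{−β} ⟨τ − k₂⟩^{−γ} dτ ≤ C ⟨k₁ − k₂⟩^{−γ} φ_β(k₁ − k₂), where φ_β(k) = 1 if β > 1, φ_β(k) = log(1 + ⟨k⟩) if β = 1, and φ_β(k) = ⟨k⟩^{1−β} if β < 1. -/
open MeasureTheory Real Set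
open scoped ENNReal

/-- Japanese bracket `⟨x⟩ = (1 + x²)^{1/2}`. -/
noncomputable def jap (x : ℝ) : ℝ := Real.sqrt (1 + x ^ 2)

/-- The function `φ_β` from the calculus lemma. -/
noncomputable def phiβ (β k : ℝ) : ℝ :=
  if 1 < β then 1
  else if β = 1 then Real.log (1 + jap k)
  else jap k ^ (1 - β)

noncomputable def Phi (p a : ℝ) : ℝ :=
  if 1 < p then 1 else if p = 1 then Real.log (1 + a) else a ^ (1-p)



lemma one_le_jap (x : ℝ) : 1 ≤ jap x := by
  rw [jap]
  nlinarith [Real.sq_sqrt (show (0:ℝ) ≤ 1+x^2 by positivity), Real.sqrt_nonneg (1+x^2)]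

lemma jap_pos (x : ℝ) : 0 < jap x := lt_of_lt_of_le one_pos (one_le_jap x)

lemma abs_le_jap (x : ℝ) : |x| ≤ jap x := by
  rw [jap, ← Real.sqrt_sq_eq_abs]
  exact Real.sqrt_le_sqrt (by nlinarith)

lemma jap_le_one_add_abs (x : ℝ) : jap x ≤ 1 + |x| := by
  rw [jap, show 1 + |x| = Real.sqrt ((1 + |x|)^2) by
    rw [Real.sqrt_sq (by positivity)]]
  apply Real.sqrt_le_sqrt
  have : |x|^2 = x^2 := sq_abs x
  nlinarith [abs_nonneg x]

lemma jap_neg (x : ℝ) : jap (-x) = jap x := by simp [jap]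

/-- if `|a|/2 ≤ |b|` then `jap a / 2 ≤ jap b` -/
lemma jap_half_le {a b : ℝ} (h : |a|/2 ≤ |b|) : jap a / 2 ≤ jap b := by
  have h2 : a^2/4 ≤ b^2 := by
    have := sq_abs a; have := sq_abs b
    nlinarith [abs_nonneg a, abs_nonneg b]
  have : jap a ≤ 2 * jap b := by
    rw [jap, jap, show 2 * Real.sqrt (1 + b^2) = Real.sqrt (4 * (1 + b^2)) by
      rw [show (4:ℝ) = 2^2 by norm_num, Real.sqrt_mul (by positivity),
        Real.sqrt_sq (by norm_num)]]
    exact Real.sqrt_le_sqrt (by nlinarith)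
  linarith

lemma jap_rpow_neg_le {p : ℝ} (hp : 0 ≤ p) {a b : ℝ} (h : |a|/2 ≤ |b|) :
    jap b ^ (-p) ≤ 2^p * jap a ^ (-p) := by
  have h1 : jap a / 2 ≤ jap b := jap_half_le h
  have h2 : (0:ℝ) < jap a / 2 := by have := jap_pos a; linarith
  calc jap b ^ (-p) ≤ (jap a / 2) ^ (-p) :=
        Real.rpow_le_rpow_of_nonpos h2 h1 (by linarith)
    _ = 2^p * jap a ^ (-p) := by
        rw [Real.div_rpow (jap_pos a).le (by norm_num), Real.rpow_neg (jap_pos a).le,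
          Real.rpow_neg (by norm_num : (0:ℝ) ≤ 2), div_eq_mul_inv, inv_inv]
        ring

lemma jap_rpow_le_rpow {p : ℝ} (hp : 0 ≤ p) {x : ℝ} (hx : 0 < x) (h : x ≤ jap x) :
    jap x ^ (-p) ≤ x ^ (-p) :=
  Real.rpow_le_rpow_of_nonpos hx h (by linarith)

lemma jap_rpow_le_one {p : ℝ} (hp : 0 ≤ p) (x : ℝ) :
    jap x ^ (-p) ≤ 1 :=
  Real.rpow_le_one_of_one_le_of_nonpos (one_le_jap x) (by linarith)

lemma jap_rpow_pos {p x : ℝ} : 0 < jap x ^ (-p) := Real.rpow_pos_of_pos (jap_pos x) _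

lemma measurable_jap : Measurable jap :=
  (Real.continuous_sqrt.comp (by continuity)).measurable


noncomputable def Bint (p M : ℝ) : ℝ := if p = 1 then Real.log M else (M ^ (1-p) - 1)/(1-p)

lemma Bint_nonneg {p M : ℝ} (hM : 1 ≤ M) : 0 ≤ Bint p M := by
  unfold Bint
  split_ifs with h
  · exact Real.log_nonneg hM
  · rcases lt_or_gt_of_ne (fun he : p = 1 => h he) with hlt | hgt
    · apply div_nonneg _ (by linarith)
      have : (1:ℝ) ≤ M ^ (1-p) := Real.one_le_rpow hM (by linarith)
      linarith
    · apply div_nonneg_of_nonpos (by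
        have : M ^ (1-p) ≤ 1 := Real.rpow_le_one_of_one_le_of_nonpos hM (by linarith)
        linarith) (by linarith)

lemma lintegral_Ioc_rpow (p M : ℝ) (hp : 0 ≤ p) (hM : 1 ≤ M) :
    ∫⁻ x in Ioc (1:ℝ) M, ENNReal.ofReal (x ^ (-p)) = ENNReal.ofReal (Bint p M) := by
  have hcont : ContinuousOn (fun x : ℝ => x ^ (-p)) (Icc 1 M) := by
    apply ContinuousOn.rpow_const continuousOn_id
    intro x hx; exact Or.inl (by have := hx.1; positivity)
  have hInt : IntegrableOn (fun x : ℝ => x ^ (-p)) (Ioc 1 M) :=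
    (hcont.integrableOn_Icc).mono_set Ioc_subset_Icc_self
  rw [← ofReal_integral_eq_lintegral_ofReal hInt ?_]
  · congr 1
    rw [← intervalIntegral.integral_of_le hM]
    by_cases hp1 : p = 1
    · subst hp1
      rw [show (fun x : ℝ => x ^ (-(1:ℝ))) = (fun x : ℝ => x⁻¹) from
        funext fun x => Real.rpow_neg_one x]
      rw [integral_inv (by
        intro hmem
        rcases Set.mem_uIcc.mp hmem with ⟨h1, _⟩ | ⟨_, h2⟩ <;> linarith)]
      simp [Bint]
    · rw [integral_rpow (Or.inr ⟨by
        intro hcon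
        apply hp1
        have : p = 1 := by linarith [neg_injective (hcon : -p = -1)]
        exact this, by
        intro hmem
        rcases Set.mem_uIcc.mp hmem with ⟨h1, _⟩ | ⟨_, h2⟩ <;> linarith⟩)]
      unfold Bint
      rw [if_neg hp1, Real.one_rpow]
      ring_nf
  · filter_upwards [ae_restrict_mem measurableSet_Ioc] with x hx
    exact Real.rpow_nonneg (by linarith [hx.1]) _

lemma lintegral_Ioi_rpow (p m : ℝ) (hp : 1 < p) (hm : 0 < m) :
    ∫⁻ x in Ioi m, ENNReal.ofReal (x ^ (-p)) = ENNReal.ofReal (m ^ (1-p) / (p-1)) := by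
  have hInt : IntegrableOn (fun x : ℝ => x ^ (-p)) (Ioi m) :=
    integrableOn_Ioi_rpow_of_lt (by linarith) hm
  rw [← ofReal_integral_eq_lintegral_ofReal hInt ?_]
  · congr 1
    rw [integral_Ioi_rpow_of_lt (by linarith) hm]
    rw [show -p + 1 = 1 - p by ring]
    rw [div_eq_div_iff (by linarith) (by linarith)]
    ring
  · filter_upwards [ae_restrict_mem measurableSet_Ioi] with x hx
    exact Real.rpow_nonneg (by linarith [mem_Ioi.mp hx]) _


lemma lintegral_comp_neg (g : ℝ → ℝ≥0∞) (A : Set ℝ) :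
    ∫⁻ x in (fun x : ℝ => -x) ⁻¹' A, g (-x) = ∫⁻ x in A, g x :=
  (Measure.measurePreserving_neg volume).setLIntegral_comp_preimage_emb
    (MeasurableEquiv.neg ℝ).measurableEmbedding g A

lemma lintegral_comp_add (g : ℝ → ℝ≥0∞) (A : Set ℝ) (c : ℝ) :
    ∫⁻ x in (fun x : ℝ => x + c) ⁻¹' A, g (x + c) = ∫⁻ x in A, g x :=
  (measurePreserving_add_right volume c).setLIntegral_comp_preimage_emb
    (MeasurableEquiv.addRight c).measurableEmbedding g A

lemma meas_rpow_ofReal (p : ℝ) :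
    Measurable fun x : ℝ => ENNReal.ofReal (x ^ (-p)) :=
  ENNReal.measurable_ofReal.comp (measurable_id.pow_const (-p))

lemma piece_Ioc (p M : ℝ) (hp : 0 ≤ p) (hM : 1 ≤ M) :
    ∫⁻ x in Ioc (1:ℝ) M, ENNReal.ofReal (jap x ^ (-p)) ≤ ENNReal.ofReal (Bint p M) := by
  rw [← lintegral_Ioc_rpow p M hp hM]
  apply setLIntegral_mono (meas_rpow_ofReal p)
  intro x hx
  apply ENNReal.ofReal_le_ofReal
  exact Real.rpow_le_rpow_of_nonpos (by linarith [hx.1]) ((le_abs_self x).trans (abs_le_jap x))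
    (by linarith)

lemma piece_Ioi (p m : ℝ) (hp : 1 < p) (hm : 0 < m) :
    ∫⁻ x in Ioi m, ENNReal.ofReal (jap x ^ (-p)) ≤ ENNReal.ofReal (m ^ (1-p)/(p-1)) := by
  rw [← lintegral_Ioi_rpow p m hp hm]
  apply setLIntegral_mono (meas_rpow_ofReal p)
  intro x hx
  apply ENNReal.ofReal_le_ofReal
  exact Real.rpow_le_rpow_of_nonpos (lt_trans hm hx) ((le_abs_self x).trans (abs_le_jap x))
    (by linarith)

lemma piece_Icc (p : ℝ) (hp : 0 ≤ p) :
    ∫⁻ x in Icc (-1:ℝ) 1, ENNReal.ofReal (jap x ^ (-p)) ≤ ENNReal.ofReal 2 := by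
  calc ∫⁻ x in Icc (-1:ℝ) 1, ENNReal.ofReal (jap x ^ (-p))
      ≤ ∫⁻ _ in Icc (-1:ℝ) 1, 1 := by
        apply lintegral_mono
        intro x
        simpa using ENNReal.ofReal_le_one.mpr (jap_rpow_le_one hp x)
    _ = volume (Icc (-1:ℝ) 1) := setLIntegral_one _
    _ = ENNReal.ofReal 2 := by rw [Real.volume_Icc]; norm_num

lemma piece_neg_Ioc (p M : ℝ) (hp : 0 ≤ p) (hM : 1 ≤ M) :
    ∫⁻ x in Ico (-M) (-1:ℝ), ENNReal.ofReal (jap x ^ (-p)) ≤ ENNReal.ofReal (Bint p M) := by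
  have hset : Ico (-M) (-1:ℝ) = (fun x : ℝ => -x) ⁻¹' (Ioc 1 M) := by
    ext x; simp [neg_le, le_neg, and_comm]
  calc ∫⁻ x in Ico (-M) (-1:ℝ), ENNReal.ofReal (jap x ^ (-p))
      = ∫⁻ x in (fun x : ℝ => -x) ⁻¹' (Ioc 1 M), ENNReal.ofReal (jap (-x) ^ (-p)) := by
        rw [hset]; simp only [jap_neg]
    _ = ∫⁻ y in Ioc (1:ℝ) M, ENNReal.ofReal (jap y ^ (-p)) :=
        lintegral_comp_neg (fun y => ENNReal.ofReal (jap y ^ (-p))) _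
    _ ≤ ENNReal.ofReal (Bint p M) := piece_Ioc p M hp hM

lemma piece_neg_Ioi (p m : ℝ) (hp : 1 < p) (hm : 0 < m) :
    ∫⁻ x in Iio (-m : ℝ), ENNReal.ofReal (jap x ^ (-p)) ≤ ENNReal.ofReal (m ^ (1-p)/(p-1)) := by
  have hset : Iio (-m : ℝ) = (fun x : ℝ => -x) ⁻¹' (Ioi m) := by
    ext x; simp [lt_neg]
  calc ∫⁻ x in Iio (-m:ℝ), ENNReal.ofReal (jap x ^ (-p))
      = ∫⁻ x in (fun x : ℝ => -x) ⁻¹' (Ioi m), ENNReal.ofReal (jap (-x) ^ (-p)) := by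
        rw [hset]; simp only [jap_neg]
    _ = ∫⁻ y in Ioi m, ENNReal.ofReal (jap y ^ (-p)) :=
        lintegral_comp_neg (fun y => ENNReal.ofReal (jap y ^ (-p))) _
    _ ≤ ENNReal.ofReal (m ^ (1-p)/(p-1)) := piece_Ioi p m hp hm

lemma J_bound (p R : ℝ) (hp : 0 ≤ p) (hR : 0 ≤ R) :
    ∫⁻ x in {x : ℝ | |x| ≤ R}, ENNReal.ofReal (jap x ^ (-p)) ≤
      ENNReal.ofReal (2 + 2 * Bint p (1 + R)) := by
  have hB : 0 ≤ Bint p (1 + R) := Bint_nonneg (by linarith)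
  have hsub : {x : ℝ | |x| ≤ R} ⊆
      Icc (-1:ℝ) 1 ∪ (Ioc 1 (1+R) ∪ Ico (-(1+R)) (-1)) := by
    intro x hx
    simp only [mem_setOf_eq] at hx
    by_cases h1 : |x| ≤ 1
    · exact Or.inl (abs_le.mp h1)
    · push_neg at h1
      rcases le_or_gt 0 x with hx0 | hx0
      · refine Or.inr (Or.inl ⟨?_, ?_⟩)
        · rwa [abs_of_nonneg hx0] at h1
        · rw [abs_of_nonneg hx0] at hx; linarith
      · refine Or.inr (Or.inr ⟨?_, ?_⟩)
        · rw [abs_of_neg hx0] at hx; linarith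
        · rw [abs_of_neg hx0] at h1; linarith
  calc ∫⁻ x in {x : ℝ | |x| ≤ R}, ENNReal.ofReal (jap x ^ (-p))
      ≤ ∫⁻ x in Icc (-1:ℝ) 1 ∪ (Ioc 1 (1+R) ∪ Ico (-(1+R)) (-1)),
          ENNReal.ofReal (jap x ^ (-p)) := lintegral_mono_set hsub
    _ ≤ (∫⁻ x in Icc (-1:ℝ) 1, ENNReal.ofReal (jap x ^ (-p))) +
          ∫⁻ x in Ioc 1 (1+R) ∪ Ico (-(1+R)) (-1), ENNReal.ofReal (jap x ^ (-p)) :=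
        lintegral_union_le _ _ _
    _ ≤ ENNReal.ofReal 2 + (ENNReal.ofReal (Bint p (1+R)) + ENNReal.ofReal (Bint p (1+R))) := by
        refine add_le_add (piece_Icc p hp) (le_trans (lintegral_union_le _ _ _) ?_)
        exact add_le_add (piece_Ioc p (1+R) hp (by linarith)) (piece_neg_Ioc p (1+R) hp (by linarith))
    _ = ENNReal.ofReal (2 + 2 * Bint p (1 + R)) := by
        rw [← ENNReal.ofReal_add hB hB, ← ENNReal.ofReal_add (by norm_num) (by linarith)]
        ring_nf

lemma T_bound_one (p R : ℝ) (hp : 1 < p) (hR : 1 ≤ R) :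
    ∫⁻ x in {x : ℝ | R < |x|}, ENNReal.ofReal (jap x ^ (-p)) ≤
      ENNReal.ofReal (2 * (R ^ (1-p)/(p-1))) := by
  have ht : 0 ≤ R ^ (1-p)/(p-1) := by
    apply div_nonneg (Real.rpow_nonneg (by linarith) _) (by linarith)
  have hsub : {x : ℝ | R < |x|} ⊆ Ioi R ∪ Iio (-R) := by
    intro x hx
    simp only [mem_setOf_eq] at hx
    rcases le_or_gt 0 x with hx0 | hx0
    · exact Or.inl (by rwa [abs_of_nonneg hx0] at hx)
    · refine Or.inr ?_
      rw [abs_of_neg hx0] at hx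
      simpa [mem_Iio] using by linarith
  calc ∫⁻ x in {x : ℝ | R < |x|}, ENNReal.ofReal (jap x ^ (-p))
      ≤ ∫⁻ x in Ioi R ∪ Iio (-R), ENNReal.ofReal (jap x ^ (-p)) := lintegral_mono_set hsub
    _ ≤ (∫⁻ x in Ioi R, ENNReal.ofReal (jap x ^ (-p))) +
          ∫⁻ x in Iio (-R), ENNReal.ofReal (jap x ^ (-p)) := lintegral_union_le _ _ _
    _ ≤ ENNReal.ofReal (R ^ (1-p)/(p-1)) + ENNReal.ofReal (R ^ (1-p)/(p-1)) :=
        add_le_add (piece_Ioi p R hp (by linarith)) (piece_neg_Ioi p R hp (by linarith))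
    _ = ENNReal.ofReal (2 * (R ^ (1-p)/(p-1))) := by
        rw [← ENNReal.ofReal_add ht ht]; ring_nf

lemma T_univ (p : ℝ) (hp : 1 < p) :
    ∫⁻ x : ℝ, ENNReal.ofReal (jap x ^ (-p)) ≤ ENNReal.ofReal (2 + 2 * (1/(p-1))) := by
  have hp1 : (0:ℝ) < p - 1 := by linarith
  have ht : (0:ℝ) ≤ 1/(p-1) := by positivity
  have hone : ((1:ℝ) ^ (1-p))/(p-1) = 1/(p-1) := by rw [Real.one_rpow]
  have hsub : (univ : Set ℝ) ⊆ Icc (-1:ℝ) 1 ∪ (Ioi 1 ∪ Iio (-1)) := by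
    intro x _
    by_cases h1 : |x| ≤ 1
    · exact Or.inl (abs_le.mp h1)
    · push_neg at h1
      rcases le_or_gt 0 x with hx0 | hx0
      · exact Or.inr (Or.inl (by rw [abs_of_nonneg hx0] at h1; exact h1))
      · refine Or.inr (Or.inr ?_)
        rw [abs_of_neg hx0] at h1
        simpa [mem_Iio] using by linarith
  calc ∫⁻ x : ℝ, ENNReal.ofReal (jap x ^ (-p))
      = ∫⁻ x in (univ : Set ℝ), ENNReal.ofReal (jap x ^ (-p)) := by
        rw [Measure.restrict_univ]
    _ ≤ ∫⁻ x in Icc (-1:ℝ) 1 ∪ (Ioi 1 ∪ Iio (-1)),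
          ENNReal.ofReal (jap x ^ (-p)) := lintegral_mono_set hsub
    _ ≤ (∫⁻ x in Icc (-1:ℝ) 1, ENNReal.ofReal (jap x ^ (-p))) +
          ∫⁻ x in Ioi 1 ∪ Iio (-1), ENNReal.ofReal (jap x ^ (-p)) := lintegral_union_le _ _ _
    _ ≤ ENNReal.ofReal 2 + (ENNReal.ofReal (1/(p-1)) + ENNReal.ofReal (1/(p-1))) := by
        refine add_le_add (piece_Icc p (by linarith)) (le_trans (lintegral_union_le _ _ _) ?_)
        refine add_le_add ?_ ?_
        · have := piece_Ioi p 1 hp one_pos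
          rwa [hone] at this
        · have := piece_neg_Ioi p 1 hp one_pos
          rwa [hone] at this
    _ = ENNReal.ofReal (2 + 2 * (1/(p-1))) := by
        rw [← ENNReal.ofReal_add ht ht, ← ENNReal.ofReal_add (by norm_num) (by linarith)]
        ring_nf


lemma log_le_rpow_div {a ε : ℝ} (ha : 1 ≤ a) (hε : 0 < ε) : Real.log a ≤ a ^ ε / ε := by
  have ha0 : (0:ℝ) < a := by linarith
  have h1 : ε * Real.log a = Real.log (a ^ ε) := (Real.log_rpow ha0 ε).symm
  have h2 : Real.log (a ^ ε) ≤ a ^ ε - 1 :=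
    Real.log_le_sub_one_of_pos (Real.rpow_pos_of_pos ha0 ε)
  rw [le_div_iff₀ hε]; nlinarith

lemma log2_le_one : Real.log 2 ≤ 1 := by
  calc Real.log 2 ≤ 2 - 1 := Real.log_le_sub_one_of_pos (by norm_num)
    _ = 1 := by norm_num

lemma log2_pos : (0:ℝ) < Real.log 2 := Real.log_pos (by norm_num)

lemma one_le_inv_log2 : (1:ℝ) ≤ 1 / Real.log 2 := by
  rw [le_div_iff₀ log2_pos]; linarith [log2_le_one]

lemma Phi_ge_log2 (p : ℝ) {a : ℝ} (ha : 1 ≤ a) : Real.log 2 ≤ Phi p a := by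
  unfold Phi
  split_ifs with h1 h2
  · exact log2_le_one
  · exact Real.log_le_log (by norm_num) (by linarith)
  · calc Real.log 2 ≤ 1 := log2_le_one
      _ ≤ a ^ (1-p) := Real.one_le_rpow ha (by push_neg at h1; linarith [lt_of_le_of_ne h1 h2])

lemma Phi_pos (p : ℝ) {a : ℝ} (ha : 1 ≤ a) : 0 < Phi p a :=
  lt_of_lt_of_le log2_pos (Phi_ge_log2 p ha)

lemma H_real (β : ℝ) : ∃ C > (0:ℝ), ∀ a : ℝ, 1 ≤ a → a ^ (1 - β) ≤ C * Phi β a := by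
  have hl2 := log2_pos
  refine ⟨1 / Real.log 2 + 1, by positivity, fun a ha => ?_⟩
  rcases lt_trichotomy β 1 with hlt | heq | hgt
  · have hPhi : Phi β a = a ^ (1-β) := by
      unfold Phi; rw [if_neg (by linarith), if_neg (by linarith)]
    rw [hPhi]
    nlinarith [Real.rpow_nonneg (le_trans zero_le_one ha) (1-β), one_le_inv_log2]
  · subst heq
    have hPhi : Phi 1 a = Real.log (1 + a) := by
      unfold Phi; rw [if_neg (lt_irrefl 1), if_pos rfl]
    rw [hPhi, sub_self, Real.rpow_zero]
    have h2a : Real.log 2 ≤ Real.log (1+a) := Real.log_le_log (by norm_num) (by linarith)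
    have := mul_le_mul_of_nonneg_left h2a (le_of_lt (by positivity : (0:ℝ) < 1/Real.log 2))
    have hid : 1/Real.log 2 * Real.log 2 = 1 := by field_simp
    nlinarith [h2a]
  · have hPhi : Phi β a = 1 := by unfold Phi; rw [if_pos hgt]
    rw [hPhi, mul_one]
    have : a ^ (1-β) ≤ 1 := Real.rpow_le_one_of_one_le_of_nonpos ha (by linarith)
    linarith [one_le_inv_log2]

lemma key_real (p : ℝ) (hp : 0 ≤ p) :
    ∃ C > (0:ℝ), ∀ a M : ℝ, 1 ≤ a → 1 ≤ M → M ≤ 3 * a →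
      2 + 2 * Bint p M ≤ C * Phi p a := by
  rcases lt_trichotomy p 1 with hlt | heq | hgt
  · -- p < 1
    have h1p : (0:ℝ) < 1 - p := by linarith
    refine ⟨2 + 2 * (3 ^ (1-p) / (1-p)), by positivity, fun a M ha hM hMa => ?_⟩
    have hPhi : Phi p a = a ^ (1-p) := by
      unfold Phi; rw [if_neg (by linarith), if_neg (by linarith)]
    have hB : Bint p M = (M ^ (1-p) - 1)/(1-p) := by
      unfold Bint; rw [if_neg (by linarith)]
    have hA : (1:ℝ) ≤ a ^ (1-p) := Real.one_le_rpow ha h1p.le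
    have hM3 : M ^ (1-p) ≤ 3 ^ (1-p) * a ^ (1-p) := by
      rw [← Real.mul_rpow (by norm_num) (by linarith)]
      exact Real.rpow_le_rpow (by linarith) hMa h1p.le
    have h3p : (0:ℝ) < (3:ℝ) ^ (1-p) := by positivity
    rw [hPhi, hB]
    have hdiv : (M ^ (1-p) - 1)/(1-p) ≤ 3 ^ (1-p) * a ^ (1-p) / (1-p) := by
      gcongr
      linarith
    have hdiv2 : 3 ^ (1-p) * a ^ (1-p) / (1-p) = (3 ^ (1-p) / (1-p)) * a ^ (1-p) := by
      ring
    nlinarith [hdiv, hA]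
  · -- p = 1
    subst heq
    have hl2 := log2_pos
    have hl3 : (0:ℝ) ≤ Real.log 3 := Real.log_nonneg (by norm_num)
    refine ⟨(2 + 2 * Real.log 3)/Real.log 2 + 2, by positivity, fun a M ha hM hMa => ?_⟩
    have hPhi : Phi 1 a = Real.log (1 + a) := by
      unfold Phi; rw [if_neg (lt_irrefl 1), if_pos rfl]
    have hB : Bint 1 M = Real.log M := by unfold Bint; rw [if_pos rfl]
    rw [hPhi, hB]
    have hlM : Real.log M ≤ Real.log 3 + Real.log a := by
      rw [← Real.log_mul (by norm_num) (by positivity)]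
      exact Real.log_le_log (by linarith) hMa
    have hla : Real.log a ≤ Real.log (1+a) := Real.log_le_log (by linarith) (by linarith)
    have h2a : Real.log 2 ≤ Real.log (1+a) := Real.log_le_log (by norm_num) (by linarith)
    have hmul := mul_le_mul_of_nonneg_left h2a (by positivity :
      (0:ℝ) ≤ (2 + 2*Real.log 3)/Real.log 2)
    have hkey : (2 + 2*Real.log 3)/Real.log 2 * Real.log 2 = 2 + 2*Real.log 3 := by
      field_simp
    nlinarith [hmul]
  · -- 1 < p
    have hp1 : (0:ℝ) < p - 1 := by linarith
    refine ⟨2 + 2 * (1 / (p-1)), by positivity, fun a M ha hM hMa => ?_⟩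
    have hPhi : Phi p a = 1 := by unfold Phi; rw [if_pos hgt]
    have hB : Bint p M = (M ^ (1-p) - 1)/(1-p) := by
      unfold Bint; rw [if_neg (by linarith)]
    have hM0 : (0:ℝ) < M ^ (1-p) := Real.rpow_pos_of_pos (by linarith) _
    rw [hPhi, hB, mul_one]
    have hrw : (M ^ (1-p) - 1)/(1-p) = (1 - M ^ (1-p))/(p-1) := by
      rw [div_eq_div_iff (by linarith) (by linarith)]; ring
    have : (1 - M ^ (1-p))/(p-1) ≤ 1/(p-1) := by gcongr <;> linarith
    rw [hrw]
    linarith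

lemma cross_real (β γ : ℝ) (hγ : 0 ≤ γ) (hβγ : γ ≤ β) :
    ∃ C > (0:ℝ), ∀ a : ℝ, 1 ≤ a →
      a ^ (-β) * Phi γ a ≤ C * (a ^ (-γ) * Phi β a) := by
  obtain ⟨CH, hCH, hH⟩ := H_real β
  rcases lt_trichotomy γ 1 with hlt | heq | hgt
  · -- γ < 1
    refine ⟨CH, hCH, fun a ha => ?_⟩
    have ha0 : (0:ℝ) < a := by linarith
    have hPhiγ : Phi γ a = a ^ (1-γ) := by
      unfold Phi; rw [if_neg (by linarith), if_neg (by linarith)]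
    have hL : a ^ (-β) * Phi γ a = a ^ (-γ) * a ^ (1-β) := by
      rw [hPhiγ, ← Real.rpow_add ha0, ← Real.rpow_add ha0]
      ring_nf
    rw [hL]
    calc a ^ (-γ) * a ^ (1-β) ≤ a ^ (-γ) * (CH * Phi β a) := by
          apply mul_le_mul_of_nonneg_left (hH a ha) (Real.rpow_nonneg ha0.le _)
      _ = CH * (a ^ (-γ) * Phi β a) := by ring
  · -- γ = 1
    subst heq
    rcases eq_or_lt_of_le hβγ with hbe | hblt
    · refine ⟨1, one_pos, fun a ha => ?_⟩
      rw [← hbe, one_mul]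
    · -- β > 1
      have hb1 : (0:ℝ) < β - 1 := by linarith
      refine ⟨Real.log 2 + 1/(β-1), by positivity, fun a ha => ?_⟩
      have ha0 : (0:ℝ) < a := by linarith
      have hPhiγ : Phi 1 a = Real.log (1+a) := by
        unfold Phi; rw [if_neg (lt_irrefl 1), if_pos rfl]
      have hPhiβ : Phi β a = 1 := by unfold Phi; rw [if_pos hblt]
      rw [hPhiγ, hPhiβ, mul_one]
      have hlog : Real.log (1+a) ≤ Real.log 2 + Real.log a := by
        rw [← Real.log_mul (by norm_num) (by positivity)]
        exact Real.log_le_log (by linarith) (by linarith)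
      have hlog2 : Real.log a ≤ a ^ (β-1) / (β-1) := log_le_rpow_div ha hb1
      have hab : a ^ (-β) * a ^ (β-1) = a ^ (-1:ℝ) := by
        rw [← Real.rpow_add ha0]; ring_nf
      have haβ1 : a ^ (-β) ≤ a ^ (-1:ℝ) :=
        Real.rpow_le_rpow_of_exponent_le ha (by linarith)
      have hp1 : (0:ℝ) < a ^ (-β) := Real.rpow_pos_of_pos ha0 _
      have hp2 : (0:ℝ) < a ^ (-1:ℝ) := Real.rpow_pos_of_pos ha0 _
      calc a ^ (-β) * Real.log (1+a)
          ≤ a ^ (-β) * (Real.log 2 + a ^ (β-1)/(β-1)) := by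
            apply mul_le_mul_of_nonneg_left _ hp1.le
            linarith
        _ = Real.log 2 * a ^ (-β) + (a ^ (-β) * a ^ (β-1))/(β-1) := by ring
        _ ≤ Real.log 2 * a ^ (-1:ℝ) + a ^ (-1:ℝ)/(β-1) := by
            rw [hab]
            have := mul_le_mul_of_nonneg_left haβ1 log2_pos.le
            linarith
        _ = (Real.log 2 + 1/(β-1)) * a ^ (-1:ℝ) := by ring
  · -- 1 < γ ≤ β
    refine ⟨1, one_pos, fun a ha => ?_⟩
    have hPhiγ : Phi γ a = 1 := by unfold Phi; rw [if_pos hgt]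
    have hPhiβ : Phi β a = 1 := by unfold Phi; rw [if_pos (lt_of_lt_of_le hgt hβγ)]
    rw [hPhiγ, hPhiβ, mul_one, mul_one, one_mul]
    exact Real.rpow_le_rpow_of_exponent_le ha (by linarith)


set_option maxHeartbeats 2000000 in
lemma master (β γ : ℝ) (hγ : 0 ≤ γ) (hβγ : γ ≤ β) (hsum : 1 < β + γ) :
    ∃ C > (0:ℝ), ∀ k : ℝ,
      ∫⁻ τ : ℝ, ENNReal.ofReal (jap τ ^ (-β) * jap (τ - k) ^ (-γ)) ≤
        ENNReal.ofReal (C * (jap k ^ (-γ) * Phi β (jap k))) := by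
  have hβ : 0 ≤ β := le_trans hγ hβγ
  set p := β + γ with hp_def
  have hp1 : 1 < p := hsum
  have hpm1 : (0:ℝ) < p - 1 := by linarith
  obtain ⟨Cγk, hCγk, hkeyγ⟩ := key_real γ hγ
  obtain ⟨Cβk, hCβk, hkeyβ⟩ := key_real β hβ
  obtain ⟨Ccr, hCcr, hcross⟩ := cross_real β γ hγ hβγ
  obtain ⟨CH, hCH, hH⟩ := H_real β
  set C1 : ℝ := 2^β * Cγk * Ccr with hC1_def
  set C2 : ℝ := 2^γ * Cβk with hC2_def
  set C3a : ℝ := 2^γ * (2 * ((2/3:ℝ)^(1-p) / (p-1))) * CH with hC3a_def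
  set C3b : ℝ := 2^γ * (2 + 2*(1/(p-1))) / ((3/2:ℝ)^(-γ) * Real.log 2) with hC3b_def
  have h23 : (0:ℝ) < (2/3:ℝ)^(1-p) := by positivity
  have h32 : (0:ℝ) < (3/2:ℝ)^(-γ) := by positivity
  have hC1 : 0 < C1 := by positivity
  have hC2 : 0 < C2 := by positivity
  have hC3a : 0 < C3a := by positivity
  have hC3b : 0 < C3b := by
    apply div_pos (by positivity) (by positivity)
  refine ⟨C1 + C2 + max C3a C3b, by positivity, fun k => ?_⟩
  set K := |k| with hK_def
  set a := jap k with ha_def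
  have hK0 : 0 ≤ K := abs_nonneg k
  have ha1 : 1 ≤ a := one_le_jap k
  have ha0 : (0:ℝ) < a := by linarith
  have hKa : K ≤ a := abs_le_jap k
  have haK : a ≤ 1 + K := jap_le_one_add_abs k
  set Y : ℝ := a ^ (-γ) * Phi β a with hY_def
  have hY0 : 0 < Y := mul_pos (Real.rpow_pos_of_pos ha0 _) (Phi_pos β ha1)
  -- the three pieces
  set c1 : ℝ := 2^β * a^(-β) with hc1_def
  set c2 : ℝ := 2^γ * a^(-γ) with hc2_def
  have hc1p : 0 < c1 := by positivity
  have hc2p : 0 < c2 := by positivity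
  set S1 : Set ℝ := {τ : ℝ | |τ - k| ≤ K/2} with hS1_def
  set S2 : Set ℝ := {τ : ℝ | |τ| ≤ 2*K} with hS2_def
  set S3 : Set ℝ := {τ : ℝ | 2*K < |τ|} with hS3_def
  have hS1m : MeasurableSet S1 :=
    measurableSet_le ((measurable_id.sub_const k).abs) measurable_const
  have hS2m : MeasurableSet S2 := measurableSet_le measurable_id.abs measurable_const
  have hS3m : MeasurableSet S3 := measurableSet_lt measurable_const measurable_id.abs
  set f1 : ℝ → ℝ≥0∞ := fun τ => ENNReal.ofReal (c1 * jap (τ - k) ^ (-γ)) with hf1_def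
  set f2 : ℝ → ℝ≥0∞ := fun τ => ENNReal.ofReal (c2 * jap τ ^ (-β)) with hf2_def
  set f3 : ℝ → ℝ≥0∞ := fun τ => ENNReal.ofReal (2^γ * jap τ ^ (-p)) with hf3_def
  have hf1m : Measurable f1 :=
    (((measurable_jap.comp (measurable_id.sub_const k)).pow_const (-γ)).const_mul c1).ennreal_ofReal
  have hf2m : Measurable f2 :=
    ((measurable_jap.pow_const (-β)).const_mul c2).ennreal_ofReal
  have hf3m : Measurable f3 :=
    ((measurable_jap.pow_const (-p)).const_mul (2^γ)).ennreal_ofReal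
  -- pointwise bound
  have hpt : ∀ τ : ℝ, ENNReal.ofReal (jap τ ^ (-β) * jap (τ - k) ^ (-γ)) ≤
      S1.indicator f1 τ + S2.indicator f2 τ + S3.indicator f3 τ := by
    intro τ
    have hj1 : (0:ℝ) ≤ jap (τ - k) ^ (-γ) := Real.rpow_nonneg (jap_pos _).le _
    have hj2 : (0:ℝ) ≤ jap τ ^ (-β) := Real.rpow_nonneg (jap_pos _).le _
    by_cases h1 : |τ - k| ≤ K/2
    · have htri : K - |τ - k| ≤ |τ| := by
        have := abs_sub τ (τ - k)
        simp only [sub_sub_cancel] at this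
        linarith [this]
      have habs : |k|/2 ≤ |τ| := by rw [← hK_def]; linarith
      have hb : jap τ ^ (-β) ≤ 2^β * jap k ^ (-β) := jap_rpow_neg_le hβ habs
      have : ENNReal.ofReal (jap τ ^ (-β) * jap (τ - k) ^ (-γ)) ≤ S1.indicator f1 τ := by
        rw [Set.indicator_of_mem (by exact h1 : τ ∈ S1)]
        apply ENNReal.ofReal_le_ofReal
        calc jap τ ^ (-β) * jap (τ - k) ^ (-γ)
            ≤ (2^β * jap k ^ (-β)) * jap (τ - k) ^ (-γ) :=
              mul_le_mul_of_nonneg_right hb hj1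
          _ = c1 * jap (τ - k) ^ (-γ) := by rw [hc1_def, ha_def]
      calc ENNReal.ofReal (jap τ ^ (-β) * jap (τ - k) ^ (-γ)) ≤ S1.indicator f1 τ := this
        _ ≤ S1.indicator f1 τ + S2.indicator f2 τ + S3.indicator f3 τ := by
            rw [add_assoc]; exact le_self_add
    · push_neg at h1
      have habs : |k|/2 ≤ |τ - k| := by rw [← hK_def]; linarith
      have hb : jap (τ - k) ^ (-γ) ≤ 2^γ * jap k ^ (-γ) := jap_rpow_neg_le hγ habs
      by_cases h2 : |τ| ≤ 2*K
      · have : ENNReal.ofReal (jap τ ^ (-β) * jap (τ - k) ^ (-γ)) ≤ S2.indicator f2 τ := by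
          rw [Set.indicator_of_mem (by exact h2 : τ ∈ S2)]
          apply ENNReal.ofReal_le_ofReal
          calc jap τ ^ (-β) * jap (τ - k) ^ (-γ)
              ≤ jap τ ^ (-β) * (2^γ * jap k ^ (-γ)) :=
                mul_le_mul_of_nonneg_left hb hj2
            _ = c2 * jap τ ^ (-β) := by rw [hc2_def, ha_def]; ring
        calc ENNReal.ofReal (jap τ ^ (-β) * jap (τ - k) ^ (-γ)) ≤ S2.indicator f2 τ := this
          _ ≤ S1.indicator f1 τ + S2.indicator f2 τ := le_add_self
          _ ≤ S1.indicator f1 τ + S2.indicator f2 τ + S3.indicator f3 τ := le_self_add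
      · push_neg at h2
        have habs' : |τ|/2 ≤ |τ - k| := by
          have h' := abs_sub_abs_le_abs_sub τ k
          have e1 := hK_def.le
          have e2 := hK_def.ge
          linarith
        have hb' : jap (τ - k) ^ (-γ) ≤ 2^γ * jap τ ^ (-γ) := jap_rpow_neg_le hγ habs'
        have hsplit : jap τ ^ (-p) = jap τ ^ (-β) * jap τ ^ (-γ) := by
          rw [← Real.rpow_add (jap_pos τ)]; rw [hp_def]; ring_nf
        have : ENNReal.ofReal (jap τ ^ (-β) * jap (τ - k) ^ (-γ)) ≤ S3.indicator f3 τ := by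
          rw [Set.indicator_of_mem (by exact h2 : τ ∈ S3)]
          apply ENNReal.ofReal_le_ofReal
          calc jap τ ^ (-β) * jap (τ - k) ^ (-γ)
              ≤ jap τ ^ (-β) * (2^γ * jap τ ^ (-γ)) :=
                mul_le_mul_of_nonneg_left hb' hj2
            _ = 2^γ * jap τ ^ (-p) := by rw [hsplit]; ring
        calc ENNReal.ofReal (jap τ ^ (-β) * jap (τ - k) ^ (-γ)) ≤ S3.indicator f3 τ := this
          _ ≤ (S1.indicator f1 τ + S2.indicator f2 τ) + S3.indicator f3 τ := le_add_self
  -- split the integral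
  have hsplit : ∫⁻ τ : ℝ, ENNReal.ofReal (jap τ ^ (-β) * jap (τ - k) ^ (-γ)) ≤
      (∫⁻ τ in S1, f1 τ) + (∫⁻ τ in S2, f2 τ) + (∫⁻ τ in S3, f3 τ) := by
    calc ∫⁻ τ : ℝ, ENNReal.ofReal (jap τ ^ (-β) * jap (τ - k) ^ (-γ))
        ≤ ∫⁻ τ : ℝ, (S1.indicator f1 τ + S2.indicator f2 τ + S3.indicator f3 τ) :=
          lintegral_mono hpt
      _ = (∫⁻ τ, S1.indicator f1 τ) + (∫⁻ τ, S2.indicator f2 τ) + (∫⁻ τ, S3.indicator f3 τ) := by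
          rw [lintegral_add_left (f := fun τ => S1.indicator f1 τ + S2.indicator f2 τ)
              ((hf1m.indicator hS1m).add (hf2m.indicator hS2m)),
            lintegral_add_left (hf1m.indicator hS1m)]
      _ = (∫⁻ τ in S1, f1 τ) + (∫⁻ τ in S2, f2 τ) + (∫⁻ τ in S3, f3 τ) := by
          rw [lintegral_indicator hS1m, lintegral_indicator hS2m, lintegral_indicator hS3m]
  -- piece 1
  have hI1 : (∫⁻ τ in S1, f1 τ) ≤ ENNReal.ofReal (c1 * (2 + 2 * Bint γ (1 + K/2))) := by
    have hshift : (∫⁻ τ in S1, ENNReal.ofReal (jap (τ - k) ^ (-γ))) =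
        ∫⁻ x in {x : ℝ | |x| ≤ K/2}, ENNReal.ofReal (jap x ^ (-γ)) := by
      have hSet : S1 = (fun x : ℝ => x + (-k)) ⁻¹' {x : ℝ | |x| ≤ K/2} := by
        ext x; simp [hS1_def, sub_eq_add_neg]
      rw [hSet]
      have := lintegral_comp_add (fun x => ENNReal.ofReal (jap x ^ (-γ)))
        {x : ℝ | |x| ≤ K/2} (-k)
      simpa [sub_eq_add_neg] using this
    calc ∫⁻ τ in S1, f1 τ
        = ENNReal.ofReal c1 * ∫⁻ τ in S1, ENNReal.ofReal (jap (τ - k) ^ (-γ)) := by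
          simp_rw [hf1_def, ENNReal.ofReal_mul hc1p.le]
          rw [lintegral_const_mul' _ _ ENNReal.ofReal_ne_top]
      _ = ENNReal.ofReal c1 * ∫⁻ x in {x : ℝ | |x| ≤ K/2}, ENNReal.ofReal (jap x ^ (-γ)) := by
          rw [hshift]
      _ ≤ ENNReal.ofReal c1 * ENNReal.ofReal (2 + 2 * Bint γ (1 + K/2)) := by
          exact mul_le_mul_right (J_bound γ (K/2) hγ (by linarith)) _
      _ = ENNReal.ofReal (c1 * (2 + 2 * Bint γ (1 + K/2))) := by
          rw [← ENNReal.ofReal_mul hc1p.le]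
  -- piece 2
  have hI2 : (∫⁻ τ in S2, f2 τ) ≤ ENNReal.ofReal (c2 * (2 + 2 * Bint β (1 + 2*K))) := by
    calc ∫⁻ τ in S2, f2 τ
        = ENNReal.ofReal c2 * ∫⁻ τ in S2, ENNReal.ofReal (jap τ ^ (-β)) := by
          simp_rw [hf2_def, ENNReal.ofReal_mul hc2p.le]
          rw [lintegral_const_mul' _ _ ENNReal.ofReal_ne_top]
      _ ≤ ENNReal.ofReal c2 * ENNReal.ofReal (2 + 2 * Bint β (1 + 2*K)) :=
          mul_le_mul_right (J_bound β (2*K) hβ (by linarith)) _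
      _ = ENNReal.ofReal (c2 * (2 + 2 * Bint β (1 + 2*K))) := by
          rw [← ENNReal.ofReal_mul hc2p.le]
  -- real bounds for pieces 1 and 2
  have hreal1 : c1 * (2 + 2 * Bint γ (1 + K/2)) ≤ C1 * Y := by
    have hkey := hkeyγ a (1 + K/2) ha1 (by linarith) (by linarith)
    have hstep : c1 * (2 + 2 * Bint γ (1 + K/2)) ≤ c1 * (Cγk * Phi γ a) :=
      mul_le_mul_of_nonneg_left hkey hc1p.le
    have hcr := hcross a ha1
    calc c1 * (2 + 2 * Bint γ (1 + K/2)) ≤ c1 * (Cγk * Phi γ a) := hstep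
      _ = (2^β * Cγk) * (a^(-β) * Phi γ a) := by rw [hc1_def]; ring
      _ ≤ (2^β * Cγk) * (Ccr * (a^(-γ) * Phi β a)) := by
          apply mul_le_mul_of_nonneg_left hcr (by positivity)
      _ = C1 * Y := by rw [hC1_def, hY_def]; ring
  have hreal2 : c2 * (2 + 2 * Bint β (1 + 2*K)) ≤ C2 * Y := by
    have hkey := hkeyβ a (1 + 2*K) ha1 (by linarith) (by linarith)
    calc c2 * (2 + 2 * Bint β (1 + 2*K)) ≤ c2 * (Cβk * Phi β a) :=
        mul_le_mul_of_nonneg_left hkey hc2p.le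
      _ = C2 * Y := by rw [hc2_def, hC2_def, hY_def]; ring
  -- piece 3
  have hI3 : (∫⁻ τ in S3, f3 τ) ≤ ENNReal.ofReal ((max C3a C3b) * Y) := by
    have hpull : (∫⁻ τ in S3, f3 τ) =
        ENNReal.ofReal (2^γ) * ∫⁻ τ in S3, ENNReal.ofReal (jap τ ^ (-p)) := by
      simp_rw [hf3_def, ENNReal.ofReal_mul (by positivity : (0:ℝ) ≤ 2^γ)]
      rw [lintegral_const_mul' _ _ ENNReal.ofReal_ne_top]
    by_cases hKbig : 1/2 ≤ K
    · -- large k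
      have h2K : 1 ≤ 2*K := by linarith
      have hTB := T_bound_one p (2*K) hp1 h2K
      have h2K0 : (0:ℝ) < 2*K := by linarith
      have h23a : (2/3:ℝ) * a ≤ 2*K := by
        have : a ≤ 3*K := by linarith
        linarith
      have hrp : (2*K) ^ (1-p) ≤ (2/3:ℝ)^(1-p) * a^(1-p) := by
        rw [← Real.mul_rpow (by norm_num) ha0.le]
        exact Real.rpow_le_rpow_of_nonpos (by positivity) h23a (by linarith)
      have hsplit2 : a ^ (1-p) = a^(-γ) * a^(1-β) := by
        rw [← Real.rpow_add ha0]; rw [hp_def]; ring_nf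
      have hHa := hH a ha1
      have hrealT : 2^γ * (2 * ((2*K) ^ (1-p)/(p-1))) ≤ (max C3a C3b) * Y := by
        have step1 : (2*K) ^ (1-p)/(p-1) ≤ ((2/3:ℝ)^(1-p) * (a^(-γ) * a^(1-β)))/(p-1) := by
          rw [← hsplit2]; gcongr
        have step2 : a^(-γ) * a^(1-β) ≤ a^(-γ) * (CH * Phi β a) :=
          mul_le_mul_of_nonneg_left hHa (by positivity)
        have hC3aY : 2^γ * (2 * (((2/3:ℝ)^(1-p) * (a^(-γ) * (CH * Phi β a)))/(p-1))) = C3a * Y := by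
          rw [hC3a_def, hY_def]; field_simp
        have hchain : (2*K) ^ (1-p) ≤ (2/3:ℝ)^(1-p) * (a^(-γ) * (CH * Phi β a)) := by
          refine hrp.trans ?_
          rw [hsplit2]
          exact mul_le_mul_of_nonneg_left step2 h23.le
        have : 2^γ * (2 * ((2*K) ^ (1-p)/(p-1))) ≤ C3a * Y := by
          rw [← hC3aY]
          gcongr
        exact this.trans (mul_le_mul_of_nonneg_right (le_max_left _ _) hY0.le)
      calc ∫⁻ τ in S3, f3 τ
          = ENNReal.ofReal (2^γ) * ∫⁻ τ in S3, ENNReal.ofReal (jap τ ^ (-p)) := hpull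
        _ ≤ ENNReal.ofReal (2^γ) * ENNReal.ofReal (2 * ((2*K) ^ (1-p)/(p-1))) :=
            mul_le_mul_right (by rw [hS3_def]; exact hTB) _
        _ = ENNReal.ofReal (2^γ * (2 * ((2*K) ^ (1-p)/(p-1)))) := by
            rw [← ENNReal.ofReal_mul (by positivity)]
        _ ≤ ENNReal.ofReal ((max C3a C3b) * Y) := ENNReal.ofReal_le_ofReal hrealT
    · -- small k
      push_neg at hKbig
      have hTU := T_univ p hp1
      have hYlb : (3/2:ℝ)^(-γ) * Real.log 2 ≤ Y := by
        have ha32 : a ≤ 3/2 := by linarith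
        have h1 : (3/2:ℝ)^(-γ) ≤ a^(-γ) :=
          Real.rpow_le_rpow_of_nonpos ha0 ha32 (by linarith)
        have h2 : Real.log 2 ≤ Phi β a := Phi_ge_log2 β ha1
        rw [hY_def]
        exact mul_le_mul h1 h2 log2_pos.le (by positivity)
      have hrealT : 2^γ * (2 + 2*(1/(p-1))) ≤ (max C3a C3b) * Y := by
        have hXY : 2^γ * (2 + 2*(1/(p-1))) = C3b * ((3/2:ℝ)^(-γ) * Real.log 2) := by
          rw [hC3b_def]
          exact (div_mul_cancel₀ _ (ne_of_gt (mul_pos h32 log2_pos))).symm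
        calc 2^γ * (2 + 2*(1/(p-1))) = C3b * ((3/2:ℝ)^(-γ) * Real.log 2) := hXY
          _ ≤ C3b * Y := mul_le_mul_of_nonneg_left hYlb hC3b.le
          _ ≤ (max C3a C3b) * Y := mul_le_mul_of_nonneg_right (le_max_right _ _) hY0.le
      calc ∫⁻ τ in S3, f3 τ
          = ENNReal.ofReal (2^γ) * ∫⁻ τ in S3, ENNReal.ofReal (jap τ ^ (-p)) := hpull
        _ ≤ ENNReal.ofReal (2^γ) * ∫⁻ τ : ℝ, ENNReal.ofReal (jap τ ^ (-p)) :=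
            mul_le_mul_right (setLIntegral_le_lintegral _ _) _
        _ ≤ ENNReal.ofReal (2^γ) * ENNReal.ofReal (2 + 2*(1/(p-1))) :=
            mul_le_mul_right hTU _
        _ = ENNReal.ofReal (2^γ * (2 + 2*(1/(p-1)))) := by
            rw [← ENNReal.ofReal_mul (by positivity)]
        _ ≤ ENNReal.ofReal ((max C3a C3b) * Y) := ENNReal.ofReal_le_ofReal hrealT
  -- combine
  calc ∫⁻ τ : ℝ, ENNReal.ofReal (jap τ ^ (-β) * jap (τ - k) ^ (-γ))
      ≤ (∫⁻ τ in S1, f1 τ) + (∫⁻ τ in S2, f2 τ) + (∫⁻ τ in S3, f3 τ) := hsplit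
    _ ≤ ENNReal.ofReal (C1 * Y) + ENNReal.ofReal (C2 * Y) + ENNReal.ofReal ((max C3a C3b) * Y) := by
        refine add_le_add (add_le_add ?_ ?_) hI3
        · exact hI1.trans (ENNReal.ofReal_le_ofReal hreal1)
        · exact hI2.trans (ENNReal.ofReal_le_ofReal hreal2)
    _ = ENNReal.ofReal ((C1 + C2 + max C3a C3b) * Y) := by
        rw [← ENNReal.ofReal_add (by positivity) (by positivity),
          ← ENNReal.ofReal_add (by positivity) (by positivity)]
        ring_nf
    _ = ENNReal.ofReal ((C1 + C2 + max C3a C3b) * (jap k ^ (-γ) * Phi β (jap k))) := by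
        rw [hY_def, ha_def]


/-- Calculus lemma: for `β ≥ γ ≥ 0` with `β + γ > 1`,
`∫_ℝ ⟨τ − k₁⟩^{−β} ⟨τ − k₂⟩^{−γ} dτ ≲ ⟨k₁ − k₂⟩^{−γ} φ_β(k₁ − k₂)`. -/
theorem stmt0 (β γ : ℝ) (hγ : 0 ≤ γ) (hβγ : γ ≤ β) (hsum : 1 < β + γ) :
    ∃ C > (0:ℝ), ∀ k₁ k₂ : ℝ,
      ∫⁻ τ : ℝ, ENNReal.ofReal (jap (τ - k₁) ^ (-β) * jap (τ - k₂) ^ (-γ)) ≤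
        ENNReal.ofReal (C * jap (k₁ - k₂) ^ (-γ) * phiβ β (k₁ - k₂)) := by
  obtain ⟨C, hC, hbound⟩ := master β γ hγ hβγ hsum
  refine ⟨C, hC, fun k₁ k₂ => ?_⟩
  have hshift : ∫⁻ τ : ℝ, ENNReal.ofReal (jap (τ - k₁) ^ (-β) * jap (τ - k₂) ^ (-γ)) =
      ∫⁻ σ : ℝ, ENNReal.ofReal (jap σ ^ (-β) * jap (σ - (k₂ - k₁)) ^ (-γ)) := by
    rw [← lintegral_add_right_eq_self
      (fun τ => ENNReal.ofReal (jap (τ - k₁) ^ (-β) * jap (τ - k₂) ^ (-γ))) k₁]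
    congr 1
    ext σ
    congr 2 <;> ring_nf
  have hjap : jap (k₂ - k₁) = jap (k₁ - k₂) := by
    rw [show k₂ - k₁ = -(k₁ - k₂) by ring, jap_neg]
  have hphi : phiβ β (k₁ - k₂) = Phi β (jap (k₁ - k₂)) := rfl
  rw [hshift, hphi, mul_assoc]
  have := hbound (k₂ - k₁)
  rwa [hjap] at this
end

section
/- For ξ ∈ ℝ, ξ ≠ 0, define the kernel K_ξ(θ,η) := (η/(η² + θ²)) · 1_{{η² + θ² < |ξ|}} for θ ∈ ℝ, η > 0. Then there exists a constant C > 0, independent of ξ, such that for every g ∈ L²(0,∞), ‖ ∫_0^∞ K_ξ(·,η) g(η) dη ‖_{L²_θ(ℝ)} ≤ C ‖g‖_{L²(0,∞)}. In particular, for every 0 < ε < 1 one has ∫_0^∞ K_ξ(θ,η) |η|^{−ε} dη ≲ |θ|^{−ε} and ∫_{−∞}^∞ K_ξ(θ,η) |θ|^{−ε} dθ ≲ |η|^{−ε}, uniformly in ξ. -/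
open MeasureTheory
open scoped ENNReal

/-- The low-frequency kernel `K_ξ(θ,η) = (η/(η² + θ²)) 1_{η² + θ² < |ξ|}`. -/
noncomputable def Kker (ξ θ η : ℝ) : ℝ :=
  if η ^ 2 + θ ^ 2 < |ξ| then η / (η ^ 2 + θ ^ 2) else 0

section SchurAux
open Set

/-- The common Schur constant. -/
noncomputable def Cc (ε : ℝ) : ℝ := 1/ε + 2/(1-ε) + 4



lemma Kker_nonneg (ξ θ : ℝ) {η : ℝ} (hη : 0 < η) : 0 ≤ Kker ξ θ η := by
  unfold Kker
  split
  · exact div_nonneg hη.le (by positivity)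
  · exact le_rfl

lemma Kker_le (ξ θ : ℝ) (η : ℝ) : Kker ξ θ η ≤ η / (η ^ 2 + θ ^ 2) ∨ Kker ξ θ η = 0 := by
  unfold Kker; split
  · exact Or.inl le_rfl
  · exact Or.inr rfl

lemma Kker_le' (ξ θ : ℝ) {η : ℝ} (hη : 0 < η) : Kker ξ θ η ≤ η / (η ^ 2 + θ ^ 2) := by
  unfold Kker; split
  · exact le_rfl
  · exact div_nonneg hη.le (by positivity)

lemma Kker_neg_left (ξ θ η : ℝ) : Kker ξ (-θ) η = Kker ξ θ η := by
  unfold Kker; rw [neg_pow]; norm_num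

lemma lint_rpow_Ioc {a p : ℝ} (ha : 0 < a) (hp : -1 < p) :
    ∫⁻ x in Set.Ioc (0:ℝ) a, ENNReal.ofReal (x ^ p) = ENNReal.ofReal (a ^ (p+1) / (p+1)) := by
  have hint : IntegrableOn (fun x : ℝ => x ^ p) (Set.Ioc 0 a) := by
    have := intervalIntegral.intervalIntegrable_rpow' (a := 0) (b := a) hp
    rwa [intervalIntegrable_iff_integrableOn_Ioc_of_le ha.le] at this
  rw [← ofReal_integral_eq_lintegral_ofReal hint ?hnn]
  · congr 1
    rw [← intervalIntegral.integral_of_le ha.le, integral_rpow (Or.inl hp),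
      Real.zero_rpow (by linarith), sub_zero]
  case hnn =>
    filter_upwards [ae_restrict_mem measurableSet_Ioc] with x hx
    exact Real.rpow_nonneg hx.1.le p

lemma lint_rpow_Ioi {a p : ℝ} (ha : 0 < a) (hp : p < -1) :
    ∫⁻ x in Set.Ioi a, ENNReal.ofReal (x ^ p) = ENNReal.ofReal (a ^ (p+1) / (-(p+1))) := by
  rw [← ofReal_integral_eq_lintegral_ofReal (integrableOn_Ioi_rpow_of_lt hp ha) ?hnn]
  · rw [integral_Ioi_rpow_of_lt hp ha]
    congr 1
    rw [div_neg, neg_div]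
  case hnn =>
    filter_upwards [ae_restrict_mem measurableSet_Ioi] with x hx
    exact Real.rpow_nonneg (ha.trans hx).le p

lemma lint_neg_Iio (f : ℝ → ℝ≥0∞) :
    ∫⁻ x in Set.Iio (0:ℝ), f x = ∫⁻ x in Set.Ioi (0:ℝ), f (-x) := by
  have hpre : (fun x : ℝ => -x) ⁻¹' (Set.Iio 0) = Set.Ioi 0 := by
    ext x; simp
  have h : MeasurePreserving (fun x : ℝ => -x)
      (volume.restrict (Set.Ioi 0)) (volume.restrict (Set.Iio 0)) := by
    have := (Measure.measurePreserving_neg (volume : Measure ℝ)).restrict_preimage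
      (measurableSet_Iio (a := (0:ℝ)))
    simpa [hpre] using this
  exact (h.lintegral_comp_emb (Homeomorph.neg ℝ).measurableEmbedding f).symm



/-- The common Schur constant. -/

lemma Cc_pos {ε : ℝ} (hε0 : 0 < ε) (hε1 : ε < 1) : 0 < Cc ε := by
  unfold Cc; have h1 : 0 < 1 - ε := by linarith
  positivity

lemma boundA {ε : ℝ} (hε0 : 0 < ε) (hε1 : ε < 1) (ξ : ℝ) {θ : ℝ} (hθ : θ ≠ 0) :
    ∫⁻ η in Set.Ioi (0:ℝ), ENNReal.ofReal (Kker ξ θ η * |η| ^ (-ε)) ≤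
      ENNReal.ofReal (Cc ε * |θ| ^ (-ε)) := by
  set a := |θ| with ha_def
  have ha : 0 < a := abs_pos.2 hθ
  have hsplit : Set.Ioi (0:ℝ) = Set.Ioc 0 a ∪ Set.Ioi a := (Set.Ioc_union_Ioi_eq_Ioi ha.le).symm
  rw [hsplit]
  have h1 : ∫⁻ η in Set.Ioc (0:ℝ) a, ENNReal.ofReal (Kker ξ θ η * |η| ^ (-ε)) ≤
      ENNReal.ofReal ((θ^2)⁻¹ * (a ^ (2-ε) / (2-ε))) := by
    have hmono : ∫⁻ η in Set.Ioc (0:ℝ) a, ENNReal.ofReal (Kker ξ θ η * |η| ^ (-ε)) ≤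
        ∫⁻ η in Set.Ioc (0:ℝ) a, ENNReal.ofReal ((θ^2)⁻¹) * ENNReal.ofReal (η ^ (1-ε)) := by
      refine setLIntegral_mono' measurableSet_Ioc fun η hη => ?_
      rw [← ENNReal.ofReal_mul (by positivity)]
      refine ENNReal.ofReal_le_ofReal ?_
      have hη0 : 0 < η := hη.1
      have habs : |η| = η := abs_of_pos hη0
      have hr : (0:ℝ) ≤ η ^ (-ε) := Real.rpow_nonneg hη0.le _
      calc Kker ξ θ η * |η| ^ (-ε) ≤ (η / θ^2) * η ^ (-ε) := by
            rw [habs]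
            refine mul_le_mul_of_nonneg_right ?_ hr
            refine (Kker_le' ξ θ hη0).trans ?_
            exact div_le_div_of_nonneg_left hη0.le (by positivity) (by nlinarith)
        _ = (θ^2)⁻¹ * η ^ (1-ε) := by
            rw [show (1:ℝ) - ε = 1 + (-ε) by ring, Real.rpow_add hη0, Real.rpow_one]
            ring
    refine hmono.trans ?_
    rw [lintegral_const_mul' _ _ ENNReal.ofReal_ne_top, lint_rpow_Ioc ha (by linarith),
      show (1:ℝ) - ε + 1 = 2 - ε by ring, ← ENNReal.ofReal_mul (by positivity)]
  have h2 : ∫⁻ η in Set.Ioi a, ENNReal.ofReal (Kker ξ θ η * |η| ^ (-ε)) ≤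
      ENNReal.ofReal (a ^ (-ε) / ε) := by
    have hmono : ∫⁻ η in Set.Ioi a, ENNReal.ofReal (Kker ξ θ η * |η| ^ (-ε)) ≤
        ∫⁻ η in Set.Ioi a, ENNReal.ofReal (η ^ (-1-ε)) := by
      refine setLIntegral_mono' measurableSet_Ioi fun η hη => ?_
      refine ENNReal.ofReal_le_ofReal ?_
      have hη0 : 0 < η := ha.trans hη
      have habs : |η| = η := abs_of_pos hη0
      have hr : (0:ℝ) ≤ η ^ (-ε) := Real.rpow_nonneg hη0.le _
      calc Kker ξ θ η * |η| ^ (-ε) ≤ η⁻¹ * η ^ (-ε) := by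
            rw [habs]
            refine mul_le_mul_of_nonneg_right ((Kker_le' ξ θ hη0).trans ?_) hr
            rw [div_le_iff₀ (by positivity), inv_mul_eq_div, le_div_iff₀ hη0]
            nlinarith
        _ = η ^ (-1-ε) := by
            rw [show (-1:ℝ) - ε = (-1) + (-ε) by ring, Real.rpow_add hη0,
              Real.rpow_neg_one]
    refine hmono.trans ?_
    rw [lint_rpow_Ioi ha (by linarith), show (-1:ℝ) - ε + 1 = -ε by ring]
    norm_num
  calc ∫⁻ η in Set.Ioc (0:ℝ) a ∪ Set.Ioi a, ENNReal.ofReal (Kker ξ θ η * |η| ^ (-ε)) ≤ _ :=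
        lintegral_union_le _ _ _
    _ ≤ ENNReal.ofReal ((θ^2)⁻¹ * (a ^ (2-ε) / (2-ε))) + ENNReal.ofReal (a ^ (-ε) / ε) :=
        add_le_add h1 h2
    _ ≤ ENNReal.ofReal (Cc ε * a ^ (-ε)) := by
        have hn1 : (0:ℝ) ≤ (θ^2)⁻¹ * (a ^ (2-ε) / (2-ε)) := by
          have : (0:ℝ) < 2 - ε := by linarith
          positivity
        have hn2 : (0:ℝ) ≤ a ^ (-ε) / ε := div_nonneg (Real.rpow_nonneg ha.le _) hε0.le
        rw [← ENNReal.ofReal_add hn1 hn2]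
        refine ENNReal.ofReal_le_ofReal ?_
        have hA : (0:ℝ) ≤ a ^ (-ε) := Real.rpow_nonneg ha.le _
        have hθa : θ^2 = a^2 := (sq_abs θ).symm
        have h2ε : (1:ℝ) ≤ 2 - ε := by linarith
        have e1 : (θ^2)⁻¹ * (a ^ (2-ε) / (2-ε)) = a ^ (-ε) / (2 - ε) := by
          rw [hθa, show (2:ℝ) - ε = 2 + (-ε) by ring, Real.rpow_add ha,
            show ((2:ℝ):ℝ) = ((2:ℕ):ℝ) by norm_num, Real.rpow_natCast]
          field_simp
        rw [e1]
        have : a ^ (-ε) / (2 - ε) ≤ a ^ (-ε) := div_le_self hA h2ε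
        have h2' : a ^ (-ε) / ε = (1/ε) * a ^ (-ε) := by ring
        have hcc : Cc ε = 1/ε + 2/(1-ε) + 4 := rfl
        have h1ε : 0 < 1 - ε := by linarith
        have hpos : 0 ≤ (2/(1-ε)) * a ^ (-ε) := by positivity
        nlinarith [mul_le_mul_of_nonneg_right (le_refl (1/ε)) hA]

lemma boundB_half {ε : ℝ} (hε0 : 0 < ε) (hε1 : ε < 1) (ξ : ℝ) {η : ℝ} (hη : 0 < η) :
    ∫⁻ θ in Set.Ioi (0:ℝ), ENNReal.ofReal (Kker ξ θ η * |θ| ^ (-ε)) ≤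
      ENNReal.ofReal ((1/(1-ε) + 1) * η ^ (-ε)) := by
  have h1ε : (0:ℝ) < 1 - ε := by linarith
  have hsplit : Set.Ioi (0:ℝ) = Set.Ioc 0 η ∪ Set.Ioi η := (Set.Ioc_union_Ioi_eq_Ioi hη.le).symm
  rw [hsplit]
  have h1 : ∫⁻ θ in Set.Ioc (0:ℝ) η, ENNReal.ofReal (Kker ξ θ η * |θ| ^ (-ε)) ≤
      ENNReal.ofReal (η⁻¹ * (η ^ (1-ε) / (1-ε))) := by
    have hmono : ∫⁻ θ in Set.Ioc (0:ℝ) η, ENNReal.ofReal (Kker ξ θ η * |θ| ^ (-ε)) ≤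
        ∫⁻ θ in Set.Ioc (0:ℝ) η, ENNReal.ofReal (η⁻¹) * ENNReal.ofReal (θ ^ (-ε)) := by
      refine setLIntegral_mono' measurableSet_Ioc fun θ hθ => ?_
      rw [← ENNReal.ofReal_mul (by positivity)]
      refine ENNReal.ofReal_le_ofReal ?_
      have hθ0 : 0 < θ := hθ.1
      rw [abs_of_pos hθ0]
      refine mul_le_mul_of_nonneg_right ((Kker_le' ξ θ hη).trans ?_)
        (Real.rpow_nonneg hθ0.le _)
      rw [div_le_iff₀ (by positivity), inv_mul_eq_div, le_div_iff₀ hη]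
      nlinarith
    refine hmono.trans ?_
    rw [lintegral_const_mul' _ _ ENNReal.ofReal_ne_top, lint_rpow_Ioc hη (by linarith),
      show -ε + 1 = 1 - ε by ring, ← ENNReal.ofReal_mul (by positivity)]
  have h2 : ∫⁻ θ in Set.Ioi η, ENNReal.ofReal (Kker ξ θ η * |θ| ^ (-ε)) ≤
      ENNReal.ofReal (η * (η ^ (-1-ε) / (1+ε))) := by
    have hmono : ∫⁻ θ in Set.Ioi η, ENNReal.ofReal (Kker ξ θ η * |θ| ^ (-ε)) ≤
        ∫⁻ θ in Set.Ioi η, ENNReal.ofReal η * ENNReal.ofReal (θ ^ (-2-ε)) := by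
      refine setLIntegral_mono' measurableSet_Ioi fun θ hθ => ?_
      rw [← ENNReal.ofReal_mul hη.le]
      refine ENNReal.ofReal_le_ofReal ?_
      have hθ0 : 0 < θ := hη.trans hθ
      rw [abs_of_pos hθ0]
      calc Kker ξ θ η * θ ^ (-ε) ≤ (η / θ^2) * θ ^ (-ε) := by
            refine mul_le_mul_of_nonneg_right ((Kker_le' ξ θ hη).trans ?_)
              (Real.rpow_nonneg hθ0.le _)
            exact div_le_div_of_nonneg_left hη.le (by positivity) (by nlinarith)
        _ = η * θ ^ (-2-ε) := by
            have hth : θ ^ (-2 - ε) = (θ^2)⁻¹ * θ ^ (-ε) := by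
              rw [show (-2:ℝ) - ε = (-2) + (-ε) by ring, Real.rpow_add hθ0]
              congr 1
              rw [show ((-2:ℝ)) = ((-2:ℤ):ℝ) by norm_num, Real.rpow_intCast, zpow_neg, zpow_two, sq]
            rw [hth]
            ring
    refine hmono.trans ?_
    rw [lintegral_const_mul' _ _ ENNReal.ofReal_ne_top, lint_rpow_Ioi hη (by linarith),
      show (-2:ℝ) - ε + 1 = -1-ε by ring, show -(-1-ε) = 1+ε by ring,
      ← ENNReal.ofReal_mul hη.le]
  calc ∫⁻ θ in Set.Ioc (0:ℝ) η ∪ Set.Ioi η, ENNReal.ofReal (Kker ξ θ η * |θ| ^ (-ε)) ≤ _ :=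
        lintegral_union_le _ _ _
    _ ≤ ENNReal.ofReal (η⁻¹ * (η ^ (1-ε) / (1-ε))) + ENNReal.ofReal (η * (η ^ (-1-ε) / (1+ε))) :=
        add_le_add h1 h2
    _ ≤ ENNReal.ofReal ((1/(1-ε) + 1) * η ^ (-ε)) := by
        have hn1 : (0:ℝ) ≤ η⁻¹ * (η ^ (1-ε) / (1-ε)) := by positivity
        have hn2 : (0:ℝ) ≤ η * (η ^ (-1-ε) / (1+ε)) := by positivity
        rw [← ENNReal.ofReal_add hn1 hn2]
        refine ENNReal.ofReal_le_ofReal ?_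
        have hA : (0:ℝ) ≤ η ^ (-ε) := Real.rpow_nonneg hη.le _
        have e1 : η⁻¹ * (η ^ (1-ε) / (1-ε)) = (1/(1-ε)) * η ^ (-ε) := by
          rw [show (1:ℝ) - ε = 1 + (-ε) by ring, Real.rpow_add hη, Real.rpow_one]
          field_simp
        have e2 : η * (η ^ (-1-ε) / (1+ε)) = η ^ (-ε) / (1+ε) := by
          rw [show (-1:ℝ) - ε = (-1) + (-ε) by ring, Real.rpow_add hη, Real.rpow_neg_one]
          field_simp
        rw [e1, e2]
        have : η ^ (-ε) / (1+ε) ≤ η ^ (-ε) := div_le_self hA (by linarith)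
        linarith

lemma boundB {ε : ℝ} (hε0 : 0 < ε) (hε1 : ε < 1) (ξ : ℝ) {η : ℝ} (hη : 0 < η) :
    ∫⁻ θ : ℝ, ENNReal.ofReal (Kker ξ θ η * |θ| ^ (-ε)) ≤
      ENNReal.ofReal (Cc ε * |η| ^ (-ε)) := by
  have h1ε : (0:ℝ) < 1 - ε := by linarith
  have hsplit := (lintegral_add_compl (μ := volume)
    (fun θ : ℝ => ENNReal.ofReal (Kker ξ θ η * |θ| ^ (-ε)))
    (measurableSet_Iio (a := (0:ℝ)))).symm
  rw [compl_Iio] at hsplit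
  have hIci : ∫⁻ θ in Set.Ici (0:ℝ), ENNReal.ofReal (Kker ξ θ η * |θ| ^ (-ε)) =
      ∫⁻ θ in Set.Ioi (0:ℝ), ENNReal.ofReal (Kker ξ θ η * |θ| ^ (-ε)) := by
    rw [← Measure.restrict_congr_set Ioi_ae_eq_Ici]
  have hIio : ∫⁻ θ in Set.Iio (0:ℝ), ENNReal.ofReal (Kker ξ θ η * |θ| ^ (-ε)) =
      ∫⁻ θ in Set.Ioi (0:ℝ), ENNReal.ofReal (Kker ξ θ η * |θ| ^ (-ε)) := by
    rw [lint_neg_Iio]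
    congr 1 with θ
    rw [Kker_neg_left, abs_neg]
  rw [hsplit, hIci, hIio]
  have hhalf := boundB_half hε0 hε1 ξ hη
  calc _ ≤ ENNReal.ofReal ((1/(1-ε) + 1) * η ^ (-ε)) +
        ENNReal.ofReal ((1/(1-ε) + 1) * η ^ (-ε)) := add_le_add hhalf hhalf
    _ ≤ ENNReal.ofReal (Cc ε * |η| ^ (-ε)) := by
        rw [← ENNReal.ofReal_add (by positivity) (by positivity)]
        refine ENNReal.ofReal_le_ofReal ?_
        rw [abs_of_pos hη]
        have hA : (0:ℝ) ≤ η ^ (-ε) := Real.rpow_nonneg hη.le _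
        have : Cc ε = 1/ε + 2/(1-ε) + 4 := rfl
        have h1 : (1/(1-ε) + 1) * η ^ (-ε) + (1/(1-ε) + 1) * η ^ (-ε)
            = (2/(1-ε) + 2) * η ^ (-ε) := by ring
        rw [h1, this]
        have h2 : (2/(1-ε) + 2 : ℝ) ≤ 1/ε + 2/(1-ε) + 4 := by
          have : (0:ℝ) < 1/ε := by positivity
          linarith
        exact mul_le_mul_of_nonneg_right h2 hA




lemma measurable_Kker (ξ : ℝ) : Measurable (fun p : ℝ × ℝ => Kker ξ p.1 p.2) := by
  unfold Kker
  refine Measurable.ite ?_ (by fun_prop) measurable_const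
  exact measurableSet_lt (by fun_prop) measurable_const

lemma measurable_Kker1 (ξ θ : ℝ) : Measurable (fun η => Kker ξ θ η) :=
  (measurable_Kker ξ).comp (measurable_prodMk_left)

lemma part1_core (ξ : ℝ) (g : ℝ → ℝ) (hgm : Measurable g) :
    eLpNorm (fun θ : ℝ => ∫ η in Set.Ioi (0:ℝ), Kker ξ θ η * g η) 2 volume ≤
      ENNReal.ofReal (Cc (1/2)) * eLpNorm g 2 (volume.restrict (Set.Ioi 0)) := by
  set ν := volume.restrict (Set.Ioi (0:ℝ)) with hν
  set G : ℝ → ℝ≥0∞ := fun η => (‖g η‖₊ : ℝ≥0∞) with hG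
  set K' : ℝ → ℝ → ℝ≥0∞ := fun θ η => ENNReal.ofReal (Kker ξ θ η) with hK'
  have hGm : Measurable G := hgm.nnnorm.coe_nnreal_ennreal
  have hε0 : (0:ℝ) < 1/2 := by norm_num
  have hε1 : (1:ℝ)/2 < 1 := by norm_num
  have hCc : (0:ℝ) < Cc (1/2) := Cc_pos hε0 hε1
  -- Step A
  have hTle : ∀ θ : ℝ, (‖∫ η in Set.Ioi (0:ℝ), Kker ξ θ η * g η‖₊ : ℝ≥0∞) ≤
      ∫⁻ η, K' θ η * G η ∂ν := by
    intro θ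
    refine (enorm_integral_le_lintegral_enorm _).trans (le_of_eq ?_)
    refine setLIntegral_congr_fun measurableSet_Ioi (fun η hη => ?_)
    rw [enorm_mul, Real.enorm_eq_ofReal (Kker_nonneg ξ θ hη)]
    rfl
  -- Step B : Cauchy-Schwarz
  set J : ℝ → ℝ≥0∞ := fun θ =>
    ∫⁻ η, K' θ η * ENNReal.ofReal (η ^ ((1/2):ℝ)) * (G η) ^ (2:ℝ) ∂ν with hJ
  have hCS : ∀ θ : ℝ, θ ≠ 0 → (∫⁻ η, K' θ η * G η ∂ν) ^ (2:ℝ) ≤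
      ENNReal.ofReal (Cc (1/2) * |θ| ^ (-(1/2):ℝ)) * J θ := by
    intro θ hθ
    set u : ℝ → ℝ≥0∞ := fun η => (K' θ η) ^ ((1/2):ℝ) * ENNReal.ofReal (η ^ (-(1/4):ℝ)) with hu
    set v : ℝ → ℝ≥0∞ := fun η =>
      (K' θ η) ^ ((1/2):ℝ) * ENNReal.ofReal (η ^ ((1/4):ℝ)) * G η with hv
    have hum : Measurable u := by
      apply Measurable.mul
      · exact ((ENNReal.measurable_ofReal.comp (measurable_Kker1 ξ θ))).pow_const _
      · fun_prop
    have hvm : Measurable v := by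
      apply Measurable.mul
      apply Measurable.mul
      · exact ((ENNReal.measurable_ofReal.comp (measurable_Kker1 ξ θ))).pow_const _
      · fun_prop
      · exact hGm
    have hsq : ∀ x : ℝ≥0∞, (x ^ ((1/2):ℝ)) ^ (2:ℝ) = x := by
      intro x
      rw [← ENNReal.rpow_mul]
      norm_num
    have huv : ∫⁻ η, K' θ η * G η ∂ν = ∫⁻ η, (u * v) η ∂ν := by
      refine setLIntegral_congr_fun measurableSet_Ioi (fun η hη => ?_)
      show K' θ η * G η = u η * v η
      rw [hu, hv]
      have h1 : (K' θ η) ^ ((1/2):ℝ) * (K' θ η) ^ ((1/2):ℝ) = K' θ η := by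
        rw [← ENNReal.rpow_add_of_nonneg _ _ (by norm_num) (by norm_num)]
        norm_num
      have h2 : ENNReal.ofReal (η ^ (-(1/4):ℝ)) * ENNReal.ofReal (η ^ ((1/4):ℝ)) = 1 := by
        rw [← ENNReal.ofReal_mul (Real.rpow_nonneg (le_of_lt hη) _),
          ← Real.rpow_add hη]
        norm_num
      calc K' θ η * G η
          = ((K' θ η) ^ ((1/2):ℝ) * (K' θ η) ^ ((1/2):ℝ)) *
            (ENNReal.ofReal (η ^ (-(1/4):ℝ)) * ENNReal.ofReal (η ^ ((1/4):ℝ))) * G η := by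
            rw [h1, h2]; ring
        _ = _ := by ring
    have hpq : Real.HolderConjugate 2 2 := ⟨by norm_num, by norm_num, by norm_num⟩
    have hCSmain := ENNReal.lintegral_mul_le_Lp_mul_Lq ν hpq hum.aemeasurable hvm.aemeasurable
    have hu2 : ∫⁻ η, u η ^ (2:ℝ) ∂ν ≤ ENNReal.ofReal (Cc (1/2) * |θ| ^ (-(1/2):ℝ)) := by
      have : ∫⁻ η, u η ^ (2:ℝ) ∂ν =
          ∫⁻ η in Set.Ioi (0:ℝ), ENNReal.ofReal (Kker ξ θ η * |η| ^ (-(1/2):ℝ)) := by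
        refine setLIntegral_congr_fun measurableSet_Ioi
          (fun η hη => ?_)
        rw [hu]
        rw [ENNReal.mul_rpow_of_nonneg _ _ (by norm_num : (0:ℝ) ≤ 2), hsq,
          ENNReal.ofReal_rpow_of_nonneg (Real.rpow_nonneg (le_of_lt hη) _) (by norm_num),
          ← Real.rpow_mul (le_of_lt hη)]
        rw [← ENNReal.ofReal_mul (Kker_nonneg ξ θ hη), abs_of_pos hη]
        norm_num
      rw [this]
      exact boundA hε0 hε1 ξ hθ
    have hv2 : ∫⁻ η, v η ^ (2:ℝ) ∂ν = J θ := by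
      refine setLIntegral_congr_fun measurableSet_Ioi
        (fun η hη => ?_)
      rw [hv]
      rw [ENNReal.mul_rpow_of_nonneg _ _ (by norm_num : (0:ℝ) ≤ 2),
        ENNReal.mul_rpow_of_nonneg _ _ (by norm_num : (0:ℝ) ≤ 2), hsq,
        ENNReal.ofReal_rpow_of_nonneg (Real.rpow_nonneg (le_of_lt hη) _) (by norm_num),
        ← Real.rpow_mul (le_of_lt hη)]
      norm_num
    calc (∫⁻ η, K' θ η * G η ∂ν) ^ (2:ℝ)
        ≤ ((∫⁻ η, u η ^ (2:ℝ) ∂ν) ^ ((1/2):ℝ) * (∫⁻ η, v η ^ (2:ℝ) ∂ν) ^ ((1/2):ℝ)) ^ (2:ℝ) := by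
          rw [huv]
          refine ENNReal.rpow_le_rpow ?_ (by norm_num)
          simpa [one_div] using hCSmain
      _ = (∫⁻ η, u η ^ (2:ℝ) ∂ν) * (∫⁻ η, v η ^ (2:ℝ) ∂ν) := by
          rw [ENNReal.mul_rpow_of_nonneg _ _ (by norm_num : (0:ℝ) ≤ 2), hsq, hsq]
      _ ≤ ENNReal.ofReal (Cc (1/2) * |θ| ^ (-(1/2):ℝ)) * J θ := by
          rw [hv2]
          exact mul_le_mul_left hu2 _
  -- Step C: integrate in θ
  have h0 : ∀ᵐ θ : ℝ, θ ≠ (0:ℝ) := by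
    refine ae_iff.mpr ?_
    simp
  set c2 : ℝ≥0∞ := ENNReal.ofReal (Cc (1/2)) with hc2
  set Φ : ℝ → ℝ → ℝ≥0∞ := fun θ η =>
    ENNReal.ofReal (Cc (1/2) * |θ| ^ (-(1/2):ℝ)) *
      (K' θ η * ENNReal.ofReal (η ^ ((1/2):ℝ)) * (G η) ^ (2:ℝ)) with hΦ
  have hΦm : Measurable (fun p : ℝ × ℝ => Φ p.1 p.2) := by
    simp only [hΦ, hK', hG]
    have hK := measurable_Kker ξ
    fun_prop
  have hstepC : ∫⁻ θ : ℝ, (‖∫ η in Set.Ioi (0:ℝ), Kker ξ θ η * g η‖₊ : ℝ≥0∞) ^ (2:ℝ) ≤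
      ∫⁻ θ : ℝ, ∫⁻ η, Φ θ η ∂ν := by
    refine lintegral_mono_ae ?_
    filter_upwards [h0] with θ hθ
    calc (‖∫ η in Set.Ioi (0:ℝ), Kker ξ θ η * g η‖₊ : ℝ≥0∞) ^ (2:ℝ)
        ≤ (∫⁻ η, K' θ η * G η ∂ν) ^ (2:ℝ) := ENNReal.rpow_le_rpow (hTle θ) (by norm_num)
      _ ≤ ENNReal.ofReal (Cc (1/2) * |θ| ^ (-(1/2):ℝ)) * J θ := hCS θ hθ
      _ = ∫⁻ η, Φ θ η ∂ν := (lintegral_const_mul' _ _ ENNReal.ofReal_ne_top).symm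
  have hswap : ∫⁻ θ : ℝ, ∫⁻ η, Φ θ η ∂ν = ∫⁻ η, (∫⁻ θ : ℝ, Φ θ η) ∂ν :=
    lintegral_lintegral_swap hΦm.aemeasurable
  -- Step E: inner bound
  have hinner : ∀ᵐ η ∂ν, (∫⁻ θ : ℝ, Φ θ η) ≤ c2 * c2 * (G η) ^ (2:ℝ) := by
    filter_upwards [ae_restrict_mem measurableSet_Ioi] with η hη
    have hrw : ∀ θ : ℝ, Φ θ η = (c2 * ENNReal.ofReal (η ^ ((1/2):ℝ)) * (G η) ^ (2:ℝ)) *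
        ENNReal.ofReal (Kker ξ θ η * |θ| ^ (-(1/2):ℝ)) := by
      intro θ
      simp only [hΦ]
      rw [ENNReal.ofReal_mul hCc.le, ENNReal.ofReal_mul (Kker_nonneg ξ θ hη)]
      ring
    have hcne : (c2 * ENNReal.ofReal (η ^ ((1/2):ℝ)) * (G η) ^ (2:ℝ)) ≠ ⊤ := by
      refine ENNReal.mul_ne_top (ENNReal.mul_ne_top ENNReal.ofReal_ne_top
        ENNReal.ofReal_ne_top) ?_
      exact (ENNReal.rpow_lt_top_of_nonneg (by norm_num) ENNReal.coe_ne_top).ne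
    have hone : ENNReal.ofReal (η ^ ((1/2):ℝ)) * ENNReal.ofReal (η ^ (-(1/2):ℝ)) = 1 := by
      rw [← ENNReal.ofReal_mul (Real.rpow_nonneg (le_of_lt hη) _), ← Real.rpow_add hη]
      norm_num
    calc (∫⁻ θ : ℝ, Φ θ η)
        = (c2 * ENNReal.ofReal (η ^ ((1/2):ℝ)) * (G η) ^ (2:ℝ)) *
          ∫⁻ θ : ℝ, ENNReal.ofReal (Kker ξ θ η * |θ| ^ (-(1/2):ℝ)) := by
          simp_rw [hrw]
          exact lintegral_const_mul' _ _ hcne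
      _ ≤ (c2 * ENNReal.ofReal (η ^ ((1/2):ℝ)) * (G η) ^ (2:ℝ)) *
          ENNReal.ofReal (Cc (1/2) * |η| ^ (-(1/2):ℝ)) :=
          mul_le_mul_right (boundB hε0 hε1 ξ hη) _
      _ = c2 * c2 * (G η) ^ (2:ℝ) := by
          rw [ENNReal.ofReal_mul hCc.le, abs_of_pos hη]
          calc c2 * ENNReal.ofReal (η ^ ((1/2):ℝ)) * (G η) ^ (2:ℝ) *
              (c2 * ENNReal.ofReal (η ^ (-(1/2):ℝ)))
              = (ENNReal.ofReal (η ^ ((1/2):ℝ)) * ENNReal.ofReal (η ^ (-(1/2):ℝ))) *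
                (c2 * c2 * (G η) ^ (2:ℝ)) := by ring
            _ = c2 * c2 * (G η) ^ (2:ℝ) := by rw [hone, one_mul]
  -- Step F: conclude
  have hfinal : ∫⁻ θ : ℝ, (‖∫ η in Set.Ioi (0:ℝ), Kker ξ θ η * g η‖₊ : ℝ≥0∞) ^ (2:ℝ) ≤
      c2 * c2 * ∫⁻ η, (G η) ^ (2:ℝ) ∂ν := by
    refine hstepC.trans ?_
    rw [hswap]
    refine (lintegral_mono_ae hinner).trans (le_of_eq ?_)
    exact lintegral_const_mul' _ _ (ENNReal.mul_ne_top ENNReal.ofReal_ne_top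
      ENNReal.ofReal_ne_top)
  have hsnormT : eLpNorm (fun θ : ℝ => ∫ η in Set.Ioi (0:ℝ), Kker ξ θ η * g η) 2 volume =
      (∫⁻ θ : ℝ, (‖∫ η in Set.Ioi (0:ℝ), Kker ξ θ η * g η‖₊ : ℝ≥0∞) ^ (2:ℝ)) ^ ((1/2):ℝ) := by
    rw [eLpNorm_eq_lintegral_rpow_enorm_toReal two_ne_zero ENNReal.ofNat_ne_top]
    norm_num
    rfl
  have hsnormg : eLpNorm g 2 ν = (∫⁻ η, (G η) ^ (2:ℝ) ∂ν) ^ ((1/2):ℝ) := by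
    rw [eLpNorm_eq_lintegral_rpow_enorm_toReal two_ne_zero ENNReal.ofNat_ne_top]
    norm_num
    rfl
  rw [hsnormT, hsnormg]
  calc (∫⁻ θ : ℝ, (‖∫ η in Set.Ioi (0:ℝ), Kker ξ θ η * g η‖₊ : ℝ≥0∞) ^ (2:ℝ)) ^ ((1/2):ℝ)
      ≤ (c2 * c2 * ∫⁻ η, (G η) ^ (2:ℝ) ∂ν) ^ ((1/2):ℝ) :=
        ENNReal.rpow_le_rpow hfinal (by norm_num)
    _ = c2 * (∫⁻ η, (G η) ^ (2:ℝ) ∂ν) ^ ((1/2):ℝ) := by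
        rw [ENNReal.mul_rpow_of_nonneg _ _ (by norm_num : (0:ℝ) ≤ 1/2)]
        congr 1
        rw [hc2, ← ENNReal.ofReal_mul hCc.le,
          ENNReal.ofReal_rpow_of_nonneg (by positivity) (by norm_num)]
        congr 1
        rw [← sq, ← Real.rpow_natCast (Cc (1/2)) 2, ← Real.rpow_mul hCc.le]
        norm_num

end SchurAux

/-- The operator `g ↦ ∫_0^∞ K_ξ(·,η) g(η) dη` is bounded from `L²(0,∞)` to `L²(ℝ)`
uniformly in `ξ ≠ 0`; moreover for every `0 < ε < 1` the Schur-test bounds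
`∫_0^∞ K_ξ(θ,η) |η|^{−ε} dη ≲ |θ|^{−ε}` and `∫_ℝ K_ξ(θ,η) |θ|^{−ε} dθ ≲ |η|^{−ε}`
hold uniformly in `ξ`. -/
theorem stmt9 :
    (∃ C > (0:ℝ), ∀ ξ : ℝ, ξ ≠ 0 → ∀ g : ℝ → ℝ,
      MemLp g 2 (volume.restrict (Set.Ioi 0)) →
      eLpNorm (fun θ : ℝ => ∫ η in Set.Ioi (0:ℝ), Kker ξ θ η * g η) 2 volume ≤
        ENNReal.ofReal C * eLpNorm g 2 (volume.restrict (Set.Ioi 0))) ∧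
    (∀ ε : ℝ, 0 < ε → ε < 1 → ∃ C' > (0:ℝ), ∀ ξ : ℝ, ξ ≠ 0 →
      (∀ θ : ℝ, θ ≠ 0 →
        ∫⁻ η in Set.Ioi (0:ℝ), ENNReal.ofReal (Kker ξ θ η * |η| ^ (-ε)) ≤
          ENNReal.ofReal (C' * |θ| ^ (-ε))) ∧
      (∀ η : ℝ, 0 < η →
        ∫⁻ θ : ℝ, ENNReal.ofReal (Kker ξ θ η * |θ| ^ (-ε)) ≤
          ENNReal.ofReal (C' * |η| ^ (-ε)))) := by
  constructor
  · refine ⟨Cc (1/2), Cc_pos (by norm_num) (by norm_num), fun ξ hξ g hg => ?_⟩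
    obtain hgm := hg.1
    set g' := hgm.mk g with hg'
    have hae : g =ᵐ[volume.restrict (Set.Ioi 0)] g' := hgm.ae_eq_mk
    have hsnorm : eLpNorm g 2 (volume.restrict (Set.Ioi 0)) =
        eLpNorm g' 2 (volume.restrict (Set.Ioi 0)) := eLpNorm_congr_ae hae
    have hT : (fun θ : ℝ => ∫ η in Set.Ioi (0:ℝ), Kker ξ θ η * g η)
        = fun θ : ℝ => ∫ η in Set.Ioi (0:ℝ), Kker ξ θ η * g' η := by
      funext θ
      exact integral_congr_ae (hae.mono fun η h => by dsimp; rw [h])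
    rw [hT, hsnorm]
    exact part1_core ξ g' hgm.measurable_mk
  · intro ε hε0 hε1
    exact ⟨Cc ε, Cc_pos hε0 hε1, fun ξ hξ =>
      ⟨fun θ hθ => boundA hε0 hε1 ξ hθ, fun η hη => boundB hε0 hε1 ξ hη⟩⟩
end
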